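/- (Concatenation subadditivity, underlying the upper-bound update strategy.) Let c ≥ 0 and let x, x', y, y' be time series, with x⋅x' and y⋅y' denoting concatenations. Then d(x⋅x', y⋅y') ≤ d(x,y) + d(x',y'). In particular, for 1 ≤ i ≤ m and 1 ≤ j ≤ n (with i < m and j < n), d(x,y) ≤ D[i,j] + d((x_{i+1},…,x_m), (y_{j+1},…,y_n)), so the exact distance is bounded by a diagonal entry plus any upper bound on the distance of the remaining suffixes. -/

import Mathlib

/-- The MSM split/merge cost function `C(u, v, w)`: it is `c` if `u` lies
between `v` and `w`, and `c + min(|u-v|, |u-w|)` otherwise. -/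
noncomputable def msmC (c u v w : ℝ) : ℝ :=
  if (v ≤ u ∧ u ≤ w) ∨ (w ≤ u ∧ u ≤ v) then c else c + min |u - v| |u - w|

/-- The MSM dynamic-programming table `D[i,j]` (1-based indices) for the time
series given by the values of `x`, `y : ℕ → ℝ` at indices `1, 2, …`;
values at row/column `0` are junk.  The MSM distance between
`(x 1, …, x m)` and `(y 1, …, y n)` is `msmD c x y m n`. -/
noncomputable def msmD (c : ℝ) (x y : ℕ → ℝ) : ℕ → ℕ → ℝ
  | 0, _ => 0
  | _ + 1, 0 => 0
  | 1, 1 => |x 1 - y 1|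
  | i + 2, 1 => msmD c x y (i + 1) 1 + msmC c (x (i + 2)) (x (i + 1)) (y 1)
  | 1, j + 2 => msmD c x y 1 (j + 1) + msmC c (y (j + 2)) (x 1) (y (j + 1))
  | i + 2, j + 2 =>
      min (msmD c x y (i + 1) (j + 1) + |x (i + 2) - y (j + 2)|)
        (min (msmD c x y (i + 1) (j + 2) + msmC c (x (i + 2)) (x (i + 1)) (y (j + 2)))
          (msmD c x y (i + 2) (j + 1) + msmC c (y (j + 2)) (x (i + 2)) (y (j + 1))))
  termination_by i j => (i, j)

lemma msmD_11 (c : ℝ) (x y : ℕ → ℝ) : msmD c x y 1 1 = |x 1 - y 1| := by rw [msmD]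
lemma msmD_21 (c : ℝ) (x y : ℕ → ℝ) (i : ℕ) :
    msmD c x y (i+2) 1 = msmD c x y (i + 1) 1 + msmC c (x (i + 2)) (x (i + 1)) (y 1) := by rw [msmD]
lemma msmD_12 (c : ℝ) (x y : ℕ → ℝ) (j : ℕ) :
    msmD c x y 1 (j+2) = msmD c x y 1 (j + 1) + msmC c (y (j + 2)) (x 1) (y (j + 1)) := by rw [msmD]
lemma msmD_22 (c : ℝ) (x y : ℕ → ℝ) (i j : ℕ) : msmD c x y (i+2) (j+2) =
      min (msmD c x y (i + 1) (j + 1) + |x (i + 2) - y (j + 2)|)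
        (min (msmD c x y (i + 1) (j + 2) + msmC c (x (i + 2)) (x (i + 1)) (y (j + 2)))
          (msmD c x y (i + 2) (j + 1) + msmC c (y (j + 2)) (x (i + 2)) (y (j + 1)))) := by rw [msmD]

lemma msmD_congr (c : ℝ) (x1 y1 x2 y2 : ℕ → ℝ) (i j : ℕ)
    (hx : ∀ k, 1 ≤ k → k ≤ i → x1 k = x2 k) (hy : ∀ k, 1 ≤ k → k ≤ j → y1 k = y2 k) :
    msmD c x1 y1 i j = msmD c x2 y2 i j := by
  match i, j with
  | 0, j => rw [msmD, msmD]
  | i+1, 0 => rw [msmD, msmD]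
  | 1, 1 => rw [msmD_11, msmD_11, hx 1 le_rfl le_rfl, hy 1 le_rfl le_rfl]
  | i+2, 1 =>
    rw [msmD_21, msmD_21,
      msmD_congr c x1 y1 x2 y2 (i+1) 1 (fun k h1 h2 => hx k h1 (by omega)) hy,
      hx (i+2) (by omega) le_rfl, hx (i+1) (by omega) (by omega), hy 1 le_rfl le_rfl]
  | 1, j+2 =>
    rw [msmD_12, msmD_12,
      msmD_congr c x1 y1 x2 y2 1 (j+1) hx (fun k h1 h2 => hy k h1 (by omega)),
      hy (j+2) (by omega) le_rfl, hy (j+1) (by omega) (by omega), hx 1 le_rfl le_rfl]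
  | i+2, j+2 =>
    rw [msmD_22, msmD_22,
      msmD_congr c x1 y1 x2 y2 (i+1) (j+1) (fun k h1 h2 => hx k h1 (by omega)) (fun k h1 h2 => hy k h1 (by omega)),
      msmD_congr c x1 y1 x2 y2 (i+1) (j+2) (fun k h1 h2 => hx k h1 (by omega)) hy,
      msmD_congr c x1 y1 x2 y2 (i+2) (j+1) hx (fun k h1 h2 => hy k h1 (by omega)),
      hx (i+2) (by omega) le_rfl, hx (i+1) (by omega) (by omega),
      hy (j+2) (by omega) le_rfl, hy (j+1) (by omega) (by omega)]
  termination_by (i, j)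

lemma msm_keyA (c : ℝ) (x x' y y' X Y : ℕ → ℝ) (m n : ℕ) (hm : 1 ≤ m) (hn : 1 ≤ n)
    (hXx : ∀ k, 1 ≤ k → k ≤ m → X k = x k)
    (hX' : ∀ k, m < k → X k = x' (k - m))
    (hYy : ∀ k, 1 ≤ k → k ≤ n → Y k = y k)
    (hY' : ∀ k, n < k → Y k = y' (k - n))
    (i' j' : ℕ) (hi : 1 ≤ i') (hj : 1 ≤ j') :
    msmD c X Y (m + i') (n + j') ≤ msmD c x y m n + msmD c x' y' i' j' := by
  have hbase : msmD c X Y m n = msmD c x y m n := msmD_congr c X Y x y m n hXx hYy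
  match i', j' with
  | 1, 1 =>
    rw [show m + 1 = (m-1) + 2 by omega, show n + 1 = (n-1) + 2 by omega, msmD_22]
    refine le_trans (min_le_left _ _) ?_
    have ha : X (m-1+2) = x' 1 := by rw [hX' _ (by omega)]; congr 1; omega
    have hb : Y (n-1+2) = y' 1 := by rw [hY' _ (by omega)]; congr 1; omega
    rw [ha, hb, show m-1+1 = m by omega, show n-1+1 = n by omega, hbase, msmD_11]
  | i+2, 1 =>
    rw [show m + (i+2) = (m+i) + 2 by omega, show n + 1 = (n-1) + 2 by omega, msmD_22]
    refine le_trans (le_trans (min_le_right _ _) (min_le_left _ _)) ?_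
    have ih := msm_keyA c x x' y y' X Y m n hm hn hXx hX' hYy hY' (i+1) 1 (by omega) le_rfl
    have ha : X (m+i+2) = x' (i+2) := by rw [hX' _ (by omega)]; congr 1; omega
    have hb : X (m+i+1) = x' (i+1) := by rw [hX' _ (by omega)]; congr 1; omega
    have hc : Y (n-1+2) = y' 1 := by rw [hY' _ (by omega)]; congr 1; omega
    rw [ha, hb, hc, show m+i+1 = m+(i+1) by omega, show n-1+2 = n+1 by omega, msmD_21 c x' y']
    linarith [ih]
  | 1, j+2 =>
    rw [show m + 1 = (m-1) + 2 by omega, show n + (j+2) = (n+j) + 2 by omega, msmD_22]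
    refine le_trans (le_trans (min_le_right _ _) (min_le_right _ _)) ?_
    have ih := msm_keyA c x x' y y' X Y m n hm hn hXx hX' hYy hY' 1 (j+1) le_rfl (by omega)
    have ha : Y (n+j+2) = y' (j+2) := by rw [hY' _ (by omega)]; congr 1; omega
    have hb : Y (n+j+1) = y' (j+1) := by rw [hY' _ (by omega)]; congr 1; omega
    have hc : X (m-1+2) = x' 1 := by rw [hX' _ (by omega)]; congr 1; omega
    rw [ha, hb, hc, show n+j+1 = n+(j+1) by omega, show m-1+2 = m+1 by omega, msmD_12 c x' y']
    linarith [ih]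
  | i+2, j+2 =>
    rw [show m + (i+2) = (m+i) + 2 by omega, show n + (j+2) = (n+j) + 2 by omega,
      msmD_22, msmD_22 c x' y']
    have ih1 := msm_keyA c x x' y y' X Y m n hm hn hXx hX' hYy hY' (i+1) (j+1) (by omega) (by omega)
    have ih2 := msm_keyA c x x' y y' X Y m n hm hn hXx hX' hYy hY' (i+1) (j+2) (by omega) (by omega)
    have ih3 := msm_keyA c x x' y y' X Y m n hm hn hXx hX' hYy hY' (i+2) (j+1) (by omega) (by omega)
    have ha : X (m+i+2) = x' (i+2) := by rw [hX' _ (by omega)]; congr 1; omega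
    have hb : X (m+i+1) = x' (i+1) := by rw [hX' _ (by omega)]; congr 1; omega
    have hc : Y (n+j+2) = y' (j+2) := by rw [hY' _ (by omega)]; congr 1; omega
    have hd : Y (n+j+1) = y' (j+1) := by rw [hY' _ (by omega)]; congr 1; omega
    rw [ha, hb, hc, hd, show m+i+1 = m+(i+1) by omega, show n+j+1 = n+(j+1) by omega,
      show m+i+2 = m+(i+2) by omega, show n+j+2 = n+(j+2) by omega]
    refine le_trans (min_le_min (add_le_add ih1 le_rfl)
      (min_le_min (add_le_add ih2 le_rfl) (add_le_add ih3 le_rfl))) ?_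
    simp only [add_assoc]
    rw [min_add_add_left, min_add_add_left]
  termination_by (i', j')


/-- Concatenation subadditivity of the MSM distance:
`d(x⋅x', y⋅y') ≤ d(x,y) + d(x',y')`; in particular, the exact distance is
bounded by a table entry `D[i,j]` plus the distance of the remaining
suffixes. -/
theorem msm_concat_subadditive (c : ℝ) (hc : 0 ≤ c) (x x' y y' : ℕ → ℝ)
    (m m' n n' : ℕ) (hm : 1 ≤ m) (hm' : 1 ≤ m') (hn : 1 ≤ n) (hn' : 1 ≤ n') :
    msmD c (fun k => if k ≤ m then x k else x' (k - m))
        (fun k => if k ≤ n then y k else y' (k - n)) (m + m') (n + n') ≤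
      msmD c x y m n + msmD c x' y' m' n' ∧
    ∀ i j, 1 ≤ i → i < m → 1 ≤ j → j < n →
      msmD c x y m n ≤
        msmD c x y i j +
          msmD c (fun k => x (k + i)) (fun k => y (k + j)) (m - i) (n - j) := by
  constructor
  · exact msm_keyA c x x' y y'
      (fun k => if k ≤ m then x k else x' (k - m))
      (fun k => if k ≤ n then y k else y' (k - n)) m n hm hn
      (fun k _ h => by simp [h])
      (fun k h => by simp [show ¬ (k ≤ m) by omega])
      (fun k _ h => by simp [h])
      (fun k h => by simp [show ¬ (k ≤ n) by omega])
      m' n' hm' hn'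
  · intro i j hi him hj hjn
    have h := msm_keyA c x (fun k => x (k + i)) y (fun k => y (k + j)) x y i j hi hj
      (fun k _ _ => rfl)
      (fun k hk => by show x k = x (k - i + i); congr 1; omega)
      (fun k _ _ => rfl)
      (fun k hk => by show y k = y (k - j + j); congr 1; omega)
      (m - i) (n - j) (by omega) (by omega)
    rwa [show i + (m - i) = m by omega, show j + (n - j) = n by omega] at h
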